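/- Let N be an abelian group, n ≥ 1 an integer, and T : N → N an endomorphism with T^n = id. For an integer m ≥ 0 define the endomorphism g := id + m•(T + T² + ⋯ + T^n) (i.e. g(x) = x + m•∑_{i=1}^{n} T^i(x)). Then for all x ∈ N, (2+mn)•g(x) − g(g(x)) = (1+mn)•x. -/

import Mathlib

/-- **Farrell's Lemma, part (2) (Lemma 4.1(2)).** If `T` is an endomorphism of an abelian
group `N` with `T^n = 1`, and `g = id + m • (T + T² + ⋯ + Tⁿ)`, then
`(2+mn) • g(x) - g(g(x)) = (1+mn) • x` for all `x`. -/
theorem farrell_quadratic_identity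
    (N : Type*) [AddCommGroup N] (n : ℕ) (hn : 1 ≤ n)
    (T : AddMonoid.End N) (hT : T ^ n = 1) (m : ℕ)
    (g : AddMonoid.End N)
    (hg : ∀ x : N, g x = x + m • (∑ i ∈ Finset.range n, (T ^ (i + 1)) x)) :
    ∀ x : N, (2 + m * n) • g x - g (g x) = (1 + m * n) • x := by
  set S : AddMonoid.End N := ∑ i ∈ Finset.range n, T ^ (i + 1) with hS
  have hg' : ∀ x : N, g x = x + m • S x := by
    intro x
    rw [hg x, hS]
    exact congrArg _ (congrArg _ (AddMonoidHom.finset_sum_apply _ _ _).symm)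
  obtain ⟨k, rfl⟩ : ∃ k, n = k + 1 := ⟨n - 1, by omega⟩
  have hTS : T * S = S := by
    have h1 : T * S = ∑ i ∈ Finset.range (k + 1), T ^ (i + 2) := by
      rw [hS, Finset.mul_sum]
      refine Finset.sum_congr rfl fun i _ => ?_
      rw [← pow_succ']
    rw [h1, Finset.sum_range_succ, hS, Finset.sum_range_succ']
    have h2 : T ^ (k + 2) = T := by
      rw [pow_succ, hT, one_mul]
    rw [h2]
    simp only [zero_add, pow_one]
  have hTkS : ∀ j : ℕ, T ^ j * S = S := by
    intro j
    induction j with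
    | zero => simp
    | succ j ih => rw [pow_succ', mul_assoc, ih, hTS]
  have hSS : ∀ x : N, S (S x) = (k + 1) • S x := by
    intro x
    have : S * S = (k + 1) • S := by
      nth_rewrite 1 [hS]
      rw [Finset.sum_mul]
      rw [Finset.sum_congr rfl fun i _ => hTkS (i + 1)]
      simp
    calc S (S x) = (S * S) x := rfl
      _ = ((k + 1) • S) x := by rw [this]
      _ = (k + 1) • S x := AddMonoidHom.nsmul_apply ..
  intro x
  have hggx : g (g x) = x + m • S x + m • (S x + m • ((k + 1) • S x)) := by
    rw [hg' (g x), hg' x]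
    congr 1
    rw [map_add, map_nsmul, hSS]
  rw [hggx, hg' x]
  module
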